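/- For the coupled angular momenta system on S² × S² with parameters R₂ > R₁ > 0 and t ∈ [0,1], the functions f₁ = R₁z₁ + R₂z₂ and f₂,t = (1-t)z₁ + t(x₁x₂ + y₁y₂ + z₁z₂) Poisson-commute with respect to the symplectic form -(R₁ω_{S²} ⊕ R₂ω_{S²}). -/
import Mathlib


/-!
The coupled angular momenta system on `M = S² × S² ⊂ ℝ³ × ℝ³ ≅ ℝ⁶` with coordinates
`p = (x₁, y₁, z₁, x₂, y₂, z₂)`, each `xᵢ² + yᵢ² + zᵢ² = 1`, and symplectic form
`-(R₁ω_{S²} ⊕ R₂ω_{S²})`.  Equivalently the Poisson brackets are `{x₁,y₁} = -z₁/R₁`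
(and cyclic), `{x₂,y₂} = -z₂/R₂` (and cyclic), mixed brackets zero.
-/

abbrev P6 : Type := ℝ × ℝ × ℝ × ℝ × ℝ × ℝ

/-- Partial derivative of `f : ℝ⁶ → ℝ` at `p` in direction `e`. -/
noncomputable def pd6 (f : P6 → ℝ) (p e : P6) : ℝ := fderiv ℝ f p e

/-- The Poisson bracket on `ℝ³ × ℝ³` induced by the symplectic form
`-(R₁ω_{S²} ⊕ R₂ω_{S²})`:  `{x₁,y₁} = -z₁/R₁` (and cyclic), `{x₂,y₂} = -z₂/R₂`
(and cyclic), mixed brackets zero. -/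
noncomputable def pbCAM (R1 R2 : ℝ) (f g : P6 → ℝ) (p : P6) : ℝ :=
  -(1 / R1) *
    (p.2.2.1 * (pd6 f p (1,0,0,0,0,0) * pd6 g p (0,1,0,0,0,0)
        - pd6 f p (0,1,0,0,0,0) * pd6 g p (1,0,0,0,0,0))
    + p.1 * (pd6 f p (0,1,0,0,0,0) * pd6 g p (0,0,1,0,0,0)
        - pd6 f p (0,0,1,0,0,0) * pd6 g p (0,1,0,0,0,0))
    + p.2.1 * (pd6 f p (0,0,1,0,0,0) * pd6 g p (1,0,0,0,0,0)
        - pd6 f p (1,0,0,0,0,0) * pd6 g p (0,0,1,0,0,0)))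
  - (1 / R2) *
    (p.2.2.2.2.2 * (pd6 f p (0,0,0,1,0,0) * pd6 g p (0,0,0,0,1,0)
        - pd6 f p (0,0,0,0,1,0) * pd6 g p (0,0,0,1,0,0))
    + p.2.2.2.1 * (pd6 f p (0,0,0,0,1,0) * pd6 g p (0,0,0,0,0,1)
        - pd6 f p (0,0,0,0,0,1) * pd6 g p (0,0,0,0,1,0))
    + p.2.2.2.2.1 * (pd6 f p (0,0,0,0,0,1) * pd6 g p (0,0,0,1,0,0)
        - pd6 f p (0,0,0,1,0,0) * pd6 g p (0,0,0,0,0,1)))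



open ContinuousLinearMap in
noncomputable def cx1 : P6 →L[ℝ] ℝ := fst ℝ ℝ _
open ContinuousLinearMap in
noncomputable def cy1 : P6 →L[ℝ] ℝ := (fst ℝ ℝ _).comp (snd ℝ ℝ _)
open ContinuousLinearMap in
noncomputable def cz1 : P6 →L[ℝ] ℝ := (fst ℝ ℝ _).comp ((snd ℝ ℝ _).comp (snd ℝ ℝ _))
open ContinuousLinearMap in
noncomputable def cx2 : P6 →L[ℝ] ℝ := (fst ℝ ℝ _).comp ((snd ℝ ℝ _).comp ((snd ℝ ℝ _).comp (snd ℝ ℝ _)))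
open ContinuousLinearMap in
noncomputable def cy2 : P6 →L[ℝ] ℝ := (fst ℝ ℝ _).comp ((snd ℝ ℝ _).comp ((snd ℝ ℝ _).comp ((snd ℝ ℝ _).comp (snd ℝ ℝ _))))
open ContinuousLinearMap in
noncomputable def cz2 : P6 →L[ℝ] ℝ := (snd ℝ ℝ _).comp ((snd ℝ ℝ _).comp ((snd ℝ ℝ _).comp ((snd ℝ ℝ _).comp (snd ℝ ℝ _))))

example (p : P6) : HasFDerivAt (fun q : P6 => q.2.2.2.2.1) cy2 p := cy2.hasFDerivAt
example (p : P6) : HasFDerivAt (fun q : P6 => q.2.2.2.2.2) cz2 p := cz2.hasFDerivAt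

lemma pd6_f1 (R1 R2 : ℝ) (p e : P6) :
    pd6 (fun q : P6 => R1 * q.2.2.1 + R2 * q.2.2.2.2.2) p e = R1 * e.2.2.1 + R2 * e.2.2.2.2.2 := by
  have h : HasFDerivAt (fun q : P6 => R1 * q.2.2.1 + R2 * q.2.2.2.2.2)
      ((R1 • cz1) + (R2 • cz2)) p :=
    ((cz1.hasFDerivAt.const_mul R1).add (cz2.hasFDerivAt.const_mul R2))
  simp [pd6, h.fderiv, cz1, cz2]

lemma pd6_f2 (t : ℝ) (p e : P6) :
    pd6 (fun q : P6 => (1 - t) * q.2.2.1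
        + t * (q.1 * q.2.2.2.1 + q.2.1 * q.2.2.2.2.1 + q.2.2.1 * q.2.2.2.2.2)) p e =
      (1 - t) * e.2.2.1
        + t * ((e.1 * p.2.2.2.1 + p.1 * e.2.2.2.1) + (e.2.1 * p.2.2.2.2.1 + p.2.1 * e.2.2.2.2.1)
            + (e.2.2.1 * p.2.2.2.2.2 + p.2.2.1 * e.2.2.2.2.2)) := by
  have h : HasFDerivAt (fun q : P6 => (1 - t) * q.2.2.1
        + t * (q.1 * q.2.2.2.1 + q.2.1 * q.2.2.2.2.1 + q.2.2.1 * q.2.2.2.2.2))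
      (((1 - t) • cz1) + (t • (((p.1 • cx2 + p.2.2.2.1 • cx1) + (p.2.1 • cy2 + p.2.2.2.2.1 • cy1))
        + (p.2.2.1 • cz2 + p.2.2.2.2.2 • cz1)))) p := by
    have hx : HasFDerivAt (fun q : P6 => q.1 * q.2.2.2.1) (p.1 • cx2 + p.2.2.2.1 • cx1) p :=
      cx1.hasFDerivAt.mul cx2.hasFDerivAt
    have hy : HasFDerivAt (fun q : P6 => q.2.1 * q.2.2.2.2.1) (p.2.1 • cy2 + p.2.2.2.2.1 • cy1) p :=
      cy1.hasFDerivAt.mul cy2.hasFDerivAt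
    have hz : HasFDerivAt (fun q : P6 => q.2.2.1 * q.2.2.2.2.2) (p.2.2.1 • cz2 + p.2.2.2.2.2 • cz1) p :=
      cz1.hasFDerivAt.mul cz2.hasFDerivAt
    exact (cz1.hasFDerivAt.const_mul (1 - t)).add (((hx.add hy).add hz).const_mul t)
  simp [pd6, h.fderiv, cx1, cy1, cz1, cx2, cy2, cz2]
  ring

/-- `f₁ = R₁z₁ + R₂z₂` and `f₂,t = (1-t)z₁ + t(x₁x₂ + y₁y₂ + z₁z₂)` Poisson-commute on
`S² × S²`, for every `t ∈ [0,1]`. -/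
theorem coupled_angular_momenta_poisson_commute
    (R1 R2 : ℝ) (hR1 : 0 < R1) (hR12 : R1 < R2) :
    ∀ t ∈ Set.Icc (0 : ℝ) 1, ∀ p : P6,
      p.1 ^ 2 + p.2.1 ^ 2 + p.2.2.1 ^ 2 = 1 →
      p.2.2.2.1 ^ 2 + p.2.2.2.2.1 ^ 2 + p.2.2.2.2.2 ^ 2 = 1 →
      pbCAM R1 R2
        (fun q => R1 * q.2.2.1 + R2 * q.2.2.2.2.2)
        (fun q => (1 - t) * q.2.2.1
          + t * (q.1 * q.2.2.2.1 + q.2.1 * q.2.2.2.2.1 + q.2.2.1 * q.2.2.2.2.2)) p = 0 := by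
  intro t ht p h1 h2
  simp only [pbCAM, pd6_f1, pd6_f2]
  have h10 : R1 ≠ 0 := ne_of_gt hR1
  have h20 : R2 ≠ 0 := ne_of_gt (hR1.trans hR12)
  field_simp
  ring
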